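/- arXiv:2512.20005 — 2 statements merged into one kernel-verified Lean document; each statement's English description precedes it below -/
import Mathlib

section
/- Let Λ be an N×r real matrix with Λᵀ Λ invertible, let σ² > 0 be a real number, and let u ∈ ℝᴺ. Then σ²·I_N + Λ Λᵀ and σ²·I_r + Λᵀ Λ are invertible, and uᵀ (σ²·I_N + Λ Λᵀ)⁻¹ u = σ⁻²·‖M_Λ u‖² + uᵀ Λ (σ²·I_r + Λᵀ Λ)⁻¹ (Λᵀ Λ)⁻¹ Λᵀ u. -/
open Matrix

lemma aux_posdef (n : ℕ) (σ2 : ℝ) (hσ2 : 0 < σ2) (A : Matrix (Fin n) (Fin n) ℝ)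
    (hA : A.PosSemidef) : (σ2 • (1 : Matrix (Fin n) (Fin n) ℝ) + A).PosDef := by
  refine Matrix.PosDef.add_posSemidef ?_ hA
  rw [Matrix.posDef_iff_dotProduct_mulVec]
  constructor
  · simp [Matrix.IsHermitian, Matrix.conjTranspose_smul]
  · intro x hx
    simp only [smul_mulVec, one_mulVec, dotProduct_smul, smul_eq_mul]
    have : (0:ℝ) < star x ⬝ᵥ x := by
      simpa using dotProduct_star_self_pos_iff.mpr hx
    positivity

/-- Quadratic-form splitting (B.5)-(B.6):
`uᵀ (σ²I_N + ΛΛᵀ)⁻¹ u = σ⁻²‖M_Λ u‖² + uᵀ Λ (σ²I_r + ΛᵀΛ)⁻¹ (ΛᵀΛ)⁻¹ Λᵀ u`. -/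
theorem stmt13 (N r : ℕ) (Λ : Matrix (Fin N) (Fin r) ℝ) (hΛ : IsUnit (Λᵀ * Λ))
    (σ2 : ℝ) (hσ2 : 0 < σ2) (u : Fin N → ℝ) :
    let MΛ := (1 : Matrix (Fin N) (Fin N) ℝ) - Λ * (Λᵀ * Λ)⁻¹ * Λᵀ
    IsUnit (σ2 • (1 : Matrix (Fin N) (Fin N) ℝ) + Λ * Λᵀ) ∧
    IsUnit (σ2 • (1 : Matrix (Fin r) (Fin r) ℝ) + Λᵀ * Λ) ∧
    u ⬝ᵥ ((σ2 • (1 : Matrix (Fin N) (Fin N) ℝ) + Λ * Λᵀ)⁻¹ *ᵥ u) =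
      σ2⁻¹ * ((MΛ *ᵥ u) ⬝ᵥ (MΛ *ᵥ u))
        + u ⬝ᵥ ((Λ * (σ2 • (1 : Matrix (Fin r) (Fin r) ℝ) + Λᵀ * Λ)⁻¹ *
            (Λᵀ * Λ)⁻¹ * Λᵀ) *ᵥ u) := by
  intro MΛ
  set A : Matrix (Fin r) (Fin r) ℝ := Λᵀ * Λ with hA
  set B : Matrix (Fin N) (Fin N) ℝ := σ2 • (1 : Matrix (Fin N) (Fin N) ℝ) + Λ * Λᵀ with hB
  set S : Matrix (Fin r) (Fin r) ℝ := σ2 • (1 : Matrix (Fin r) (Fin r) ℝ) + Λᵀ * Λ with hS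
  have hBpd : B.PosDef := aux_posdef N σ2 hσ2 (Λ * Λᵀ)
    (by simpa using Matrix.posSemidef_conjTranspose_mul_self Λᵀ)
  have hSpd : S.PosDef := aux_posdef r σ2 hσ2 (Λᵀ * Λ)
    (by simpa using Matrix.posSemidef_conjTranspose_mul_self Λ)
  have hBu : IsUnit B := hBpd.isUnit
  have hSu : IsUnit S := hSpd.isUnit
  refine ⟨hBu, hSu, ?_⟩
  -- basic inverse facts
  have hAinv : A⁻¹ * A = 1 := Matrix.nonsing_inv_mul A ((Matrix.isUnit_iff_isUnit_det A).mp hΛ)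
  have hAinv' : A * A⁻¹ = 1 := Matrix.mul_nonsing_inv A ((Matrix.isUnit_iff_isUnit_det A).mp hΛ)
  have hSinv : S⁻¹ * S = 1 := Matrix.nonsing_inv_mul S ((Matrix.isUnit_iff_isUnit_det S).mp hSu)
  have hSinv' : S * S⁻¹ = 1 := Matrix.mul_nonsing_inv S ((Matrix.isUnit_iff_isUnit_det S).mp hSu)
  -- MΛ kills Λ:  MΛ * Λ = 0 and Λᵀ * MΛ = 0
  have hMΛΛ : MΛ * Λ = 0 := by
    simp only [MΛ, Matrix.sub_mul, Matrix.one_mul, Matrix.mul_assoc]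
    rw [Matrix.mul_assoc, ← hA] at *
    rw [show Λ * ((Λᵀ * Λ)⁻¹ * (Λᵀ * Λ)) = Λ * (A⁻¹ * A) by rw [← hA]]
    rw [hAinv]
    simp
  have hTM : Λᵀ * MΛ = 0 := by
    have h1 : Λᵀ * MΛ = Λᵀ - Λᵀ * Λ * ((Λᵀ * Λ)⁻¹ * Λᵀ) := by
      simp only [MΛ, Matrix.mul_sub, Matrix.mul_one, Matrix.mul_assoc]
    rw [h1, ← hA, ← Matrix.mul_assoc, hAinv']
    simp
  -- the candidate inverse of B
  set X : Matrix (Fin N) (Fin N) ℝ := σ2⁻¹ • MΛ + Λ * S⁻¹ * A⁻¹ * Λᵀ with hX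
  have hBXeq : B * X = 1 := by
    have hBΛ : B * Λ = Λ * S := by
      simp only [hB, hS, Matrix.add_mul, Matrix.mul_add, Matrix.smul_mul, Matrix.mul_smul,
        Matrix.one_mul, Matrix.mul_one, Matrix.mul_assoc]
    have hBM : B * (σ2⁻¹ • MΛ) = MΛ := by
      rw [Matrix.mul_smul, hB, Matrix.add_mul, Matrix.smul_mul, Matrix.one_mul,
        Matrix.mul_assoc, hTM, Matrix.mul_zero, add_zero, smul_smul,
        inv_mul_cancel₀ hσ2.ne', one_smul]
    have h2 : B * (Λ * S⁻¹ * A⁻¹ * Λᵀ) = Λ * A⁻¹ * Λᵀ := by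
      calc B * (Λ * S⁻¹ * A⁻¹ * Λᵀ) = (B * Λ) * (S⁻¹ * (A⁻¹ * Λᵀ)) := by
            simp only [Matrix.mul_assoc]
        _ = Λ * (S * S⁻¹) * (A⁻¹ * Λᵀ) := by rw [hBΛ]; simp only [Matrix.mul_assoc]
        _ = Λ * A⁻¹ * Λᵀ := by rw [hSinv']; simp only [Matrix.mul_one, Matrix.mul_assoc]
    rw [hX, Matrix.mul_add, hBM, h2]
    have : Λ * A⁻¹ * Λᵀ = Λ * (Λᵀ * Λ)⁻¹ * Λᵀ := by rw [← hA]
    rw [this]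
    simp only [MΛ]
    abel
  have hBinv : B⁻¹ = X := Matrix.inv_eq_right_inv hBXeq
  -- MΛ is symmetric and idempotent
  have hMsymm : MΛᵀ = MΛ := by
    have h1 : A⁻¹ᵀ = A⁻¹ := by
      rw [Matrix.transpose_nonsing_inv]
      congr 1
      rw [hA, Matrix.transpose_mul, Matrix.transpose_transpose]
    simp only [MΛ, Matrix.transpose_sub, Matrix.transpose_one, Matrix.transpose_mul,
      Matrix.transpose_transpose, ← hA, h1]
    rw [Matrix.mul_assoc]
  have hMidem : MΛ * MΛ = MΛ := by
    have h1 : MΛ * MΛ = MΛ - MΛ * Λ * ((Λᵀ * Λ)⁻¹ * Λᵀ) := by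
      simp only [MΛ, Matrix.mul_sub, Matrix.mul_one, Matrix.mul_assoc]
    rw [h1, hMΛΛ]
    simp
  have hquad : (MΛ *ᵥ u) ⬝ᵥ (MΛ *ᵥ u) = u ⬝ᵥ (MΛ *ᵥ u) := by
    calc (MΛ *ᵥ u) ⬝ᵥ (MΛ *ᵥ u) = ((MΛ *ᵥ u) ᵥ* MΛ) ⬝ᵥ u := by
          rw [Matrix.dotProduct_mulVec]
      _ = (MΛᵀ *ᵥ (MΛ *ᵥ u)) ⬝ᵥ u := by rw [Matrix.mulVec_transpose]
      _ = ((MΛᵀ * MΛ) *ᵥ u) ⬝ᵥ u := by rw [Matrix.mulVec_mulVec]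
      _ = (MΛ *ᵥ u) ⬝ᵥ u := by rw [hMsymm, hMidem]
      _ = u ⬝ᵥ (MΛ *ᵥ u) := dotProduct_comm _ _
  rw [hBinv, hX, hquad]
  simp only [Matrix.add_mulVec, dotProduct_add, smul_mulVec, dotProduct_smul,
    smul_eq_mul]
end

section
/- Let σ² > 0 be a real number, let R be a p×k₁ real matrix, C a q×k₂ real matrix, Λ := C ⊗ R (so Λ is (pq)×r with r = k₁k₂), let V be a symmetric positive definite r×r real matrix, and set V_upd := (I_r + σ⁻²·V Λᵀ Λ)⁻¹ V. Let Y be a p×q real matrix and F a k₁×k₂ real matrix, and write y := vec(Y), f := vec(F). Then (y − Λ f)ᵀ (σ²·I_{pq} + Λ V Λᵀ)⁻¹ (y − Λ f) = A₁ − A₂ + A₃ − B₁ + B₂ − B₃, where A₁ = σ⁻²·Tr(Yᵀ Y), A₂ = 2σ⁻²·Tr(Yᵀ R F Cᵀ), A₃ = σ⁻²·Tr(C Fᵀ Rᵀ R F Cᵀ), B₁ = σ⁻⁴·vec(Rᵀ Y C)ᵀ V_upd vec(Rᵀ Y C), B₂ = 2σ⁻⁴·vec(Rᵀ Y C)ᵀ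 V_upd Λᵀ Λ f, and B₃ = σ⁻⁴·fᵀ Λᵀ Λ V_upd Λᵀ Λ f. -/
open Matrix Kronecker

-- vec of a matrix as used in the statement: u = (col, row)
lemma vec_dot_trace {a b : ℕ} (A B : Matrix (Fin a) (Fin b) ℝ) :
    (fun u : Fin b × Fin a => A u.2 u.1) ⬝ᵥ (fun u => B u.2 u.1) = trace (Aᵀ * B) := by
  simp [dotProduct, trace, Matrix.mul_apply, Matrix.diag, Fintype.sum_prod_type]

lemma kron_mulVec {p q k₁ k₂ : ℕ} (R : Matrix (Fin p) (Fin k₁) ℝ) (C : Matrix (Fin q) (Fin k₂) ℝ)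
    (F : Matrix (Fin k₁) (Fin k₂) ℝ) :
    (C ⊗ₖ R) *ᵥ (fun u : Fin k₂ × Fin k₁ => F u.2 u.1)
      = fun u : Fin q × Fin p => (R * F * Cᵀ) u.2 u.1 := by
  funext u
  obtain ⟨j, i⟩ := u
  simp only [mulVec, dotProduct, kroneckerMap_apply, Matrix.mul_apply, transpose_apply,
    Fintype.sum_prod_type, Finset.sum_mul, Finset.mul_sum]
  apply Finset.sum_congr rfl
  intro l _
  apply Finset.sum_congr rfl
  intro s _
  ring

lemma psd_smul {n : Type*} [Fintype n] {c : ℝ} (hc : 0 ≤ c) {M : Matrix n n ℝ}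
    (hM : M.PosSemidef) : (c • M).PosSemidef := by
  refine ⟨?_, fun x => ?_⟩
  · unfold Matrix.IsHermitian
    rw [conjTranspose_smul, hM.1]
    simp
  · exact (hM.smul hc).2 x

lemma dot_symm {n : Type*} [Fintype n] (S : Matrix n n ℝ) (hS : Sᵀ = S) (a b : n → ℝ) :
    a ⬝ᵥ (S *ᵥ b) = b ⬝ᵥ (S *ᵥ a) := by
  rw [Matrix.dotProduct_mulVec, ← Matrix.mulVec_transpose, hS, dotProduct_comm]

lemma dot_shift {n m : Type*} [Fintype n] [Fintype m] (M : Matrix n m ℝ) (a : n → ℝ)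
    (b : m → ℝ) : a ⬝ᵥ (M *ᵥ b) = (Mᵀ *ᵥ a) ⬝ᵥ b := by
  rw [Matrix.dotProduct_mulVec, Matrix.mulVec_transpose]

/-- Quadratic-form decomposition of Lemma A.1: with `Λ = C ⊗ R`, `y = vec Y`, `f = vec F`,
`(y − Λf)ᵀ (σ²·I + Λ V Λᵀ)⁻¹ (y − Λf) = A₁ − A₂ + A₃ − B₁ + B₂ − B₃`. -/
theorem stmt17 (p q k₁ k₂ : ℕ) (σ2 : ℝ) (hσ2 : 0 < σ2)
    (R : Matrix (Fin p) (Fin k₁) ℝ) (C : Matrix (Fin q) (Fin k₂) ℝ)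
    (V : Matrix (Fin k₂ × Fin k₁) (Fin k₂ × Fin k₁) ℝ) (hV : V.PosDef)
    (Y : Matrix (Fin p) (Fin q) ℝ) (F : Matrix (Fin k₁) (Fin k₂) ℝ) :
    let Λ := C ⊗ₖ R
    let Vupd := ((1 : Matrix (Fin k₂ × Fin k₁) (Fin k₂ × Fin k₁) ℝ) +
      σ2⁻¹ • (V * Λᵀ * Λ))⁻¹ * V
    let y : Fin q × Fin p → ℝ := fun u => Y u.2 u.1
    let f : Fin k₂ × Fin k₁ → ℝ := fun u => F u.2 u.1
    let vRYC : Fin k₂ × Fin k₁ → ℝ := fun u => (Rᵀ * Y * C) u.2 u.1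
    (y - Λ *ᵥ f) ⬝ᵥ
        ((σ2 • (1 : Matrix (Fin q × Fin p) (Fin q × Fin p) ℝ) + Λ * V * Λᵀ)⁻¹ *ᵥ
          (y - Λ *ᵥ f)) =
      σ2⁻¹ * trace (Yᵀ * Y)
      - 2 * σ2⁻¹ * trace (Yᵀ * R * F * Cᵀ)
      + σ2⁻¹ * trace (C * Fᵀ * Rᵀ * R * F * Cᵀ)
      - σ2⁻¹ ^ 2 * (vRYC ⬝ᵥ (Vupd *ᵥ vRYC))
      + 2 * σ2⁻¹ ^ 2 * (vRYC ⬝ᵥ ((Vupd * Λᵀ * Λ) *ᵥ f))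
      - σ2⁻¹ ^ 2 * (f ⬝ᵥ ((Λᵀ * Λ * Vupd * Λᵀ * Λ) *ᵥ f)) := by
  intro Λ Vupd y f vRYC
  have hσ : σ2 ≠ 0 := ne_of_gt hσ2
  have hσi : (0:ℝ) ≤ σ2⁻¹ := le_of_lt (inv_pos.mpr hσ2)
  set K : Matrix (Fin k₂ × Fin k₁) (Fin k₂ × Fin k₁) ℝ := 1 + σ2⁻¹ • (V * Λᵀ * Λ) with hKdef
  have hVupd : Vupd = K⁻¹ * V := rfl
  have hL0 : (Λᵀ * Λ).PosSemidef := by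
    have h := Matrix.posSemidef_conjTranspose_mul_self Λ
    rwa [conjTranspose_eq_transpose_of_trivial] at h
  have hVdet : IsUnit V.det := hV.det_pos.ne'.isUnit
  have hVsymm : Vᵀ = V := by
    have h := hV.1
    rwa [Matrix.IsHermitian, conjTranspose_eq_transpose_of_trivial] at h
  have hPD : (V⁻¹ + σ2⁻¹ • (Λᵀ * Λ)).PosDef := hV.inv.add_posSemidef (psd_smul hσi hL0)
  have hKfact : K = V * (V⁻¹ + σ2⁻¹ • (Λᵀ * Λ)) := by
    rw [hKdef, Matrix.mul_add, Matrix.mul_nonsing_inv V hVdet, mul_smul_comm, Matrix.mul_assoc]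
  have hKdet : IsUnit K.det := by
    rw [hKfact, det_mul]; exact hVdet.mul hPD.det_pos.ne'.isUnit
  have hKW : K * Vupd = V := by
    rw [hVupd]; exact Matrix.mul_nonsing_inv_cancel_left K V hKdet
  have hkey : Vupd + σ2⁻¹ • (V * Λᵀ * Λ * Vupd) = V := by
    have h := hKW
    rwa [hKdef, Matrix.add_mul, Matrix.one_mul, smul_mul_assoc] at h
  -- symmetry of Vupd
  have hKT : Kᵀ = 1 + σ2⁻¹ • (Λᵀ * (Λ * V)) := by
    rw [hKdef]
    simp [Matrix.transpose_add, Matrix.transpose_smul, Matrix.transpose_mul, hVsymm,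
      Matrix.mul_assoc]
  have hKTdet : IsUnit Kᵀ.det := by rwa [Matrix.det_transpose]
  have hsymm : Vupdᵀ = Vupd := by
    rw [hVupd, Matrix.transpose_mul, Matrix.transpose_nonsing_inv, hVsymm]
    have hc : K * V = V * Kᵀ := by
      rw [hKdef, hKT]
      simp only [Matrix.add_mul, Matrix.mul_add, Matrix.one_mul, Matrix.mul_one,
        smul_mul_assoc, mul_smul_comm, Matrix.mul_assoc]
    calc V * Kᵀ⁻¹ = K⁻¹ * (K * V) * Kᵀ⁻¹ := by
          rw [Matrix.nonsing_inv_mul_cancel_left _ _ hKdet]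
      _ = K⁻¹ * (V * Kᵀ) * Kᵀ⁻¹ := by rw [hc]
      _ = K⁻¹ * V * (Kᵀ * Kᵀ⁻¹) := by simp [Matrix.mul_assoc]
      _ = K⁻¹ * V := by rw [Matrix.mul_nonsing_inv _ hKTdet, Matrix.mul_one]
  -- Woodbury
  set N : Matrix (Fin q × Fin p) (Fin q × Fin p) ℝ :=
    σ2⁻¹ • 1 - (σ2⁻¹ * σ2⁻¹) • (Λ * Vupd * Λᵀ) with hNdef
  have key : Λ * V * Λᵀ - Λ * Vupd * Λᵀ - σ2⁻¹ • (Λ * V * Λᵀ * (Λ * Vupd * Λᵀ)) = 0 := by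
    have h0 : V - Vupd - σ2⁻¹ • (V * Λᵀ * Λ * Vupd) = 0 := by
      rw [sub_sub, sub_eq_zero]; exact hkey.symm
    have h1 : Λ * (V - Vupd - σ2⁻¹ • (V * Λᵀ * Λ * Vupd)) * Λᵀ = 0 := by
      rw [h0]; simp
    calc Λ * V * Λᵀ - Λ * Vupd * Λᵀ - σ2⁻¹ • (Λ * V * Λᵀ * (Λ * Vupd * Λᵀ))
        = Λ * (V - Vupd - σ2⁻¹ • (V * Λᵀ * Λ * Vupd)) * Λᵀ := by
          simp only [Matrix.sub_mul, Matrix.mul_sub, Matrix.mul_smul, Matrix.smul_mul,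
            mul_smul_comm, smul_mul_assoc, Matrix.mul_assoc]
      _ = 0 := h1
  have hMN : (σ2 • (1 : Matrix (Fin q × Fin p) (Fin q × Fin p) ℝ) + Λ * V * Λᵀ) * N = 1 := by
    have hc1 : σ2 * σ2⁻¹ = 1 := mul_inv_cancel₀ hσ
    have hc2 : σ2 * (σ2⁻¹ * σ2⁻¹) = σ2⁻¹ := by field_simp
    have e1 : (σ2 • (1 : Matrix (Fin q × Fin p) (Fin q × Fin p) ℝ) + Λ * V * Λᵀ) * N
        = (σ2 * σ2⁻¹) • (1 : Matrix (Fin q × Fin p) (Fin q × Fin p) ℝ)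
          + σ2⁻¹ • (Λ * V * Λᵀ) - (σ2 * (σ2⁻¹ * σ2⁻¹)) • (Λ * Vupd * Λᵀ)
          - (σ2⁻¹ * σ2⁻¹) • (Λ * V * Λᵀ * (Λ * Vupd * Λᵀ)) := by
      rw [hNdef]
      simp only [Matrix.add_mul, Matrix.mul_sub, Matrix.mul_smul, Matrix.smul_mul,
        smul_mul_assoc, mul_smul_comm, smul_smul, Matrix.one_mul, Matrix.mul_one]
      module
    rw [e1, hc1, hc2, one_smul]
    calc (1 : Matrix (Fin q × Fin p) (Fin q × Fin p) ℝ)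
          + σ2⁻¹ • (Λ * V * Λᵀ) - σ2⁻¹ • (Λ * Vupd * Λᵀ)
          - (σ2⁻¹ * σ2⁻¹) • (Λ * V * Λᵀ * (Λ * Vupd * Λᵀ))
        = 1 + σ2⁻¹ • (Λ * V * Λᵀ - Λ * Vupd * Λᵀ
            - σ2⁻¹ • (Λ * V * Λᵀ * (Λ * Vupd * Λᵀ))) := by module
      _ = 1 := by rw [key, smul_zero, add_zero]
  have hinv : (σ2 • (1 : Matrix (Fin q × Fin p) (Fin q × Fin p) ℝ) + Λ * V * Λᵀ)⁻¹ = N :=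
    Matrix.inv_eq_right_inv hMN
  -- vec identities
  have hΛf : Λ *ᵥ f = fun u : Fin q × Fin p => (R * F * Cᵀ) u.2 u.1 := kron_mulVec R C F
  have hΛty : Λᵀ *ᵥ y = vRYC := by
    have h := kron_mulVec Rᵀ Cᵀ Y
    rw [transpose_transpose] at h
    calc Λᵀ *ᵥ y = (Cᵀ ⊗ₖ Rᵀ) *ᵥ y := by
          rw [show Λᵀ = Cᵀ ⊗ₖ Rᵀ from (kroneckerMap_transpose _ C R).symm]
      _ = vRYC := h
  set g : Fin q × Fin p → ℝ := y - Λ *ᵥ f with hg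
  have hLsymm : (Λᵀ * Λ)ᵀ = Λᵀ * Λ := by rw [Matrix.transpose_mul, transpose_transpose]
  have hΛtg : Λᵀ *ᵥ g = vRYC - (Λᵀ * Λ) *ᵥ f := by
    rw [hg, Matrix.mulVec_sub, hΛty, Matrix.mulVec_mulVec]
  -- trace identities
  have t1 : y ⬝ᵥ y = trace (Yᵀ * Y) := vec_dot_trace Y Y
  have t2 : y ⬝ᵥ (Λ *ᵥ f) = trace (Yᵀ * R * F * Cᵀ) := by
    rw [hΛf]
    exact (vec_dot_trace Y (R * F * Cᵀ)).trans (by simp [Matrix.mul_assoc])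
  have t3 : (Λ *ᵥ f) ⬝ᵥ (Λ *ᵥ f) = trace (C * Fᵀ * Rᵀ * R * F * Cᵀ) := by
    rw [hΛf]
    exact (vec_dot_trace (R * F * Cᵀ) (R * F * Cᵀ)).trans
      (by simp [Matrix.transpose_mul, Matrix.mul_assoc])
  have hgg : g ⬝ᵥ g = trace (Yᵀ * Y) - 2 * trace (Yᵀ * R * F * Cᵀ)
      + trace (C * Fᵀ * Rᵀ * R * F * Cᵀ) := by
    rw [hg, sub_dotProduct, dotProduct_sub, dotProduct_sub, dotProduct_comm (Λ *ᵥ f) y,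
      t1, t2, t3]
    ring
  -- middle quadratic form
  have hmidA : g ⬝ᵥ ((Λ * Vupd * Λᵀ) *ᵥ g) = (Λᵀ *ᵥ g) ⬝ᵥ (Vupd *ᵥ (Λᵀ *ᵥ g)) := by
    rw [← Matrix.mulVec_mulVec, ← Matrix.mulVec_mulVec, dot_shift]
  have hcross2 : vRYC ⬝ᵥ (Vupd *ᵥ ((Λᵀ * Λ) *ᵥ f)) = vRYC ⬝ᵥ ((Vupd * Λᵀ * Λ) *ᵥ f) := by
    rw [Matrix.mulVec_mulVec, ← Matrix.mul_assoc]
  have hcross : ((Λᵀ * Λ) *ᵥ f) ⬝ᵥ (Vupd *ᵥ vRYC) = vRYC ⬝ᵥ ((Vupd * Λᵀ * Λ) *ᵥ f) := by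
    rw [dot_symm Vupd hsymm, hcross2]
  have hquad : ((Λᵀ * Λ) *ᵥ f) ⬝ᵥ (Vupd *ᵥ ((Λᵀ * Λ) *ᵥ f))
      = f ⬝ᵥ ((Λᵀ * Λ * Vupd * Λᵀ * Λ) *ᵥ f) := by
    have e : (Λᵀ * Λ * Vupd * Λᵀ * Λ) *ᵥ f = (Λᵀ * Λ) *ᵥ (Vupd *ᵥ ((Λᵀ * Λ) *ᵥ f)) := by
      simp only [Matrix.mulVec_mulVec, Matrix.mul_assoc]
    have h : f ⬝ᵥ ((Λᵀ * Λ * Vupd * Λᵀ * Λ) *ᵥ f)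
        = ((Λᵀ * Λ) *ᵥ f) ⬝ᵥ (Vupd *ᵥ ((Λᵀ * Λ) *ᵥ f)) := by
      rw [e, dot_shift, hLsymm]
    exact h.symm
  have hmid : g ⬝ᵥ ((Λ * Vupd * Λᵀ) *ᵥ g)
      = vRYC ⬝ᵥ (Vupd *ᵥ vRYC) - 2 * (vRYC ⬝ᵥ ((Vupd * Λᵀ * Λ) *ᵥ f))
        + f ⬝ᵥ ((Λᵀ * Λ * Vupd * Λᵀ * Λ) *ᵥ f) := by
    rw [hmidA, hΛtg, sub_dotProduct, Matrix.mulVec_sub, dotProduct_sub, dotProduct_sub,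
      hcross, hcross2, hquad]
    ring
  rw [hinv, hNdef, Matrix.sub_mulVec, Matrix.smul_mulVec, Matrix.one_mulVec,
    Matrix.smul_mulVec, dotProduct_sub, dotProduct_smul, dotProduct_smul,
    smul_eq_mul, smul_eq_mul, hgg, hmid]
  ring
end
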